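/- Under the hypotheses that C is countably extensive with pullback-stable strong epimorphisms, binary meets of subobjects distribute over countable joins: P ∧ (⋁ₙ Pₙ) = ⋁ₙ (P ∧ Pₙ) in the subobject lattice of any object Y. -/

import Mathlib

open CategoryTheory CategoryTheory.Limits

universe v u

variable {C : Type u} [Category.{v} C]

/-- The canonical functor `∏ₙ C/Xₙ ⥤ C/∐ₙ Xₙ` taking countable coproducts of morphisms;
`C` is countably extensive if this is an equivalence for every countable family. -/
noncomputable def countExtFunctor [HasCountableCoproducts C] (X : ℕ → C) :
    (∀ n : ℕ, Over (X n)) ⥤ Over (∐ X) where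
  obj p := Over.mk (Limits.Sigma.map fun n => (p n).hom)
  map {p q} f := Over.homMk (Limits.Sigma.map fun n => (f n).left) (by dsimp; apply Limits.Sigma.hom_ext; intro n; simp)


/-- If `C` is countably extensive with pullback-stable strong epimorphisms, then binary
meets of subobjects distribute over countable joins:
`P ⊓ (⋁ₙ Pₙ) = ⋁ₙ (P ⊓ Pₙ)` in the subobject lattice of any object `Y`. -/
theorem inf_distrib_countable_joins
    [WellPowered.{v} C] [HasPullbacks C] [HasCoproducts.{v} C] [HasCountableCoproducts C]
    [HasStrongEpiMonoFactorisations C]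
    (hext : ∀ X : ℕ → C, (countExtFunctor X).IsEquivalence)
    (hstab : ∀ {P X Y Z : C} (fst : P ⟶ X) (snd : P ⟶ Y) (f : X ⟶ Z) (g : Y ⟶ Z),
      IsPullback fst snd f g → StrongEpi g → StrongEpi fst)
    {Y : C} (P : Subobject Y) (Pn : ℕ → Subobject Y) :
    letI := Subobject.completeSemilatticeSup.{v} (C := C) (B := Y)
    P ⊓ (⨆ n, Pn n) = ⨆ n, P ⊓ Pn n := by
  letI := Subobject.completeSemilatticeSup.{v} (C := C) (B := Y)
  -- helper sup lemmas (we only have `CompleteSemilatticeSup`)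
  have le_iSup' : ∀ (f : ℕ → Subobject Y) (n : ℕ), f n ≤ ⨆ m, f m := fun f n =>
    le_sSup (Set.mem_range_self n)
  have iSup_le' : ∀ (f : ℕ → Subobject Y) (a : Subobject Y), (∀ n, f n ≤ a) →
      (⨆ m, f m) ≤ a := fun f a h => sSup_le (by rintro g ⟨n, rfl⟩; exact h n)
  apply le_antisymm
  swap
  · exact iSup_le' _ _ fun n =>
      le_inf inf_le_left (le_trans inf_le_right (le_iSup' Pn n))
  -- hard direction
  set X : ℕ → C := fun n => ((Pn n : C) : C) with hX
  set f : ∐ X ⟶ Y := Sigma.desc fun n => (Pn n).arrow with hf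
  -- the join is below the image of `f`
  have hsup_le : (⨆ n, Pn n) ≤ Subobject.mk (image.ι f) := by
    refine iSup_le' _ _ fun n => ?_
    refine Subobject.le_mk_of_comm (Sigma.ι X n ≫ factorThruImage f) ?_
    simp [hf]
  set Q : Subobject Y := P ⊓ ⨆ n, Pn n with hQ
  have hQle : Q ≤ Subobject.mk (image.ι f) := le_trans inf_le_right hsup_le
  set u : (Q : C) ⟶ image f := Subobject.ofLEMk Q (image.ι f) hQle with hu
  have huQ : u ≫ image.ι f = Q.arrow := Subobject.ofLEMk_comp hQle
  -- pull back the strong epi `factorThruImage f` along `u`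
  have hpb : IsPullback (pullback.snd (factorThruImage f) u)
      (pullback.fst (factorThruImage f) u) u (factorThruImage f) :=
    (IsPullback.of_hasPullback (factorThruImage f) u).flip
  haveI hse : StrongEpi (pullback.snd (factorThruImage f) u) :=
    hstab _ _ _ _ hpb inferInstance
  set k : pullback (factorThruImage f) u ⟶ ∐ X := pullback.fst (factorThruImage f) u with hk
  -- use extensivity to decompose the pullback as a coproduct
  haveI := hext X
  set p : ∀ n : ℕ, Over (X n) := (countExtFunctor X).objPreimage (Over.mk k) with hp
  set e : (countExtFunctor X).obj p ≅ Over.mk k :=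
    (countExtFunctor X).objObjPreimageIso (Over.mk k) with he
  haveI : IsIso e.hom.left := by
    change IsIso ((Over.forget _).map e.hom); infer_instance
  have hw : e.hom.left ≫ k = Limits.Sigma.map fun n => (p n).hom := by
    simpa [countExtFunctor] using Over.w e.hom
  -- each component factors through `P ⊓ Pn n`
  set K : Subobject Y := ⨆ n, P ⊓ Pn n with hK
  have hPQ : P.Factors Q.arrow :=
    Subobject.factors_of_le Q.arrow inf_le_left (Subobject.factors_self Q)
  set w : (∐ fun n => (p n).left) ⟶ (Q : C) :=
    e.hom.left ≫ pullback.snd (factorThruImage f) u with hww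
  have hcomp : ∀ n : ℕ, (Sigma.ι (fun m => (p m).left) n ≫ w) ≫ Q.arrow
      = (p n).hom ≫ (Pn n).arrow := by
    intro n
    rw [← huQ, hww]
    simp only [Category.assoc]
    erw [Category.assoc]
    slice_lhs 3 4 => rw [← pullback.condition]
    slice_lhs 4 5 => rw [image.fac]
    rw [← hk]
    erw [← Category.assoc (Over.Hom.left e.hom) k, hw]
    erw [Sigma.ι_map_assoc, Sigma.ι_desc]
  have hfac : ∀ n : ℕ, K.Factors ((p n).hom ≫ (Pn n).arrow) := by
    intro n
    refine Subobject.factors_of_le _ (le_iSup' (fun m => P ⊓ Pn m) n) ?_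
    rw [Subobject.inf_factors]
    constructor
    · rw [← hcomp n]
      exact Subobject.factors_of_factors_right _ hPQ
    · exact Subobject.factors_comp_arrow _
  set t : (∐ fun n => (p n).left) ⟶ (K : C) :=
    Sigma.desc fun n => K.factorThru _ (hfac n) with ht
  haveI : StrongEpi w := @strongEpi_comp _ _ _ _ _ _ _ (@strongEpi_of_isIso _ _ _ _ _ this) hse
  have hsq : CommSq t w K.arrow Q.arrow := by
    constructor
    apply Sigma.hom_ext
    intro n
    rw [← Category.assoc, ht, Sigma.ι_desc, Subobject.factorThru_arrow, ← hcomp n,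
      Category.assoc]
  exact Subobject.le_of_comm hsq.lift hsq.fac_right
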